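/- Let $\Psi : [0,1] \to [0,1]$ be non-decreasing and concave with $\Psi(1) = 1$. Let $B \ge 1$ be an integer (the batch size) and let $m \le B$ be a positive integer. Suppose positive integers $\hat I_1, \dots, \hat I_m$ are such that when sorted in increasing order the $k$-th smallest is at least $k$. Then $\Psi(1 - m/B) + \sum_{k=1}^m \left[ \Psi\left(1 - \frac{\hat I_k - 1}{B}\right) - \Psi\left(1 - \frac{\hat I_k}{B}\right) \right] \ge 1$, where we additionally assume $\hat I_k \le B$ for all $k$. -/

import Mathlib

/-- For a concave function, increments over intervals of the same length
decrease as the base point moves right. -/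
lemma concave_diff {Ψ : ℝ → ℝ} (hconc : ConcaveOn ℝ (Set.Icc 0 1) Ψ)
    {x1 x2 h : ℝ} (hh : 0 ≤ h) (hx : x1 ≤ x2)
    (h1 : x1 ∈ Set.Icc (0:ℝ) 1) (h2 : x2 + h ∈ Set.Icc (0:ℝ) 1) :
    Ψ (x2 + h) - Ψ x2 ≤ Ψ (x1 + h) - Ψ x1 := by
  rcases eq_or_lt_of_le hx with rfl | hx'
  · simp
  rcases eq_or_lt_of_le hh with rfl | hh'
  · simp
  have h10 := h1.1
  have h11 := h1.2
  have h20 := h2.1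
  have h21 := h2.2
  set d : ℝ := (x2 - x1) + h with hd
  have hd0 : 0 < d := by rw [hd]; linarith
  set a : ℝ := (x2 - x1) / d with ha
  set b : ℝ := h / d with hb
  have ha0 : 0 ≤ a := div_nonneg (by linarith) hd0.le
  have hb0 : 0 ≤ b := div_nonneg hh hd0.le
  have hab : a + b = 1 := by rw [ha, hb, ← add_div, ← hd, div_self (ne_of_gt hd0)]
  have hA := hconc.2 h1 h2 ha0 hb0 hab
  have hB := hconc.2 h1 h2 hb0 ha0 (by linarith)
  have e1 : a • x1 + b • (x2 + h) = x1 + h := by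
    simp only [smul_eq_mul, ha, hb]; field_simp; ring
  have e2 : b • x1 + a • (x2 + h) = x2 := by
    simp only [smul_eq_mul, ha, hb]; field_simp; ring
  rw [e1] at hA
  rw [e2] at hB
  simp only [smul_eq_mul] at hA hB
  have key : a * Ψ x1 + b * Ψ (x2 + h) + (b * Ψ x1 + a * Ψ (x2 + h))
      = Ψ x1 + Ψ (x2 + h) := by
    linear_combination (Ψ x1 + Ψ (x2 + h)) * hab
  linarith [hA, hB, key]

/-- key dual-feasibility inequality. -/
theorem dual_feasibility
    (Ψ : ℝ → ℝ)
    (hmono : MonotoneOn Ψ (Set.Icc 0 1))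
    (hconc : ConcaveOn ℝ (Set.Icc 0 1) Ψ)
    (hmaps : ∀ x ∈ Set.Icc (0:ℝ) 1, Ψ x ∈ Set.Icc (0:ℝ) 1)
    (hone : Ψ 1 = 1)
    (B m : ℕ) (hB : 1 ≤ B) (hm : 1 ≤ m) (hmB : m ≤ B)
    (I : Fin m → ℕ) (hpos : ∀ k, 1 ≤ I k) (hle : ∀ k, I k ≤ B)
    (hsorted : ∃ σ : Equiv.Perm (Fin m), ∀ k : Fin m, (k : ℕ) + 1 ≤ I (σ k)) :
    1 ≤ Ψ (1 - (m : ℝ) / B) +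
      ∑ k : Fin m, (Ψ (1 - ((I k : ℝ) - 1) / B) - Ψ (1 - (I k : ℝ) / B)) := by
  obtain ⟨σ, hσ⟩ := hsorted
  have hB0 : (0:ℝ) < B := by exact_mod_cast hB
  set g : ℕ → ℝ := fun j => Ψ (1 - ((j:ℝ) - 1) / B) - Ψ (1 - (j:ℝ) / B) with hg
  -- monotonicity of g on [1, B]
  have gmono : ∀ j j' : ℕ, 1 ≤ j → j ≤ j' → j' ≤ B → g j ≤ g j' := by
    intro j j' hj hjj hj'B
    have hjj' : (j:ℝ) ≤ (j':ℝ) := by exact_mod_cast hjj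
    have hj1 : (1:ℝ) ≤ (j:ℝ) := by exact_mod_cast hj
    have hj'B' : (j':ℝ) ≤ B := by exact_mod_cast hj'B
    have key := concave_diff hconc (x1 := 1 - (j':ℝ)/B) (x2 := 1 - (j:ℝ)/B)
      (h := 1/B) (by positivity)
      (by have : (j:ℝ)/B ≤ (j':ℝ)/B := by gcongr
          linarith)
      (by constructor
          · have : (j':ℝ)/B ≤ 1 := by rw [div_le_one hB0]; linarith
            linarith
          · have : 0 ≤ (j':ℝ)/B := by positivity
            linarith)
      (by constructor
          · have : (j:ℝ)/B ≤ 1 := by rw [div_le_one hB0]; linarith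
            have hpB : (0:ℝ) < 1/B := by positivity
            linarith
          · have : (1:ℝ)/B ≤ (j:ℝ)/B := by gcongr
            linarith)
    have e1 : 1 - (j:ℝ)/B + 1/B = 1 - ((j:ℝ) - 1)/B := by ring
    have e2 : 1 - (j':ℝ)/B + 1/B = 1 - ((j':ℝ) - 1)/B := by ring
    rw [e1, e2] at key
    simpa [hg] using key
  -- rewrite sum using the permutation
  have hperm : ∑ k : Fin m, g (I k) = ∑ k : Fin m, g (I (σ k)) :=
    (Equiv.sum_comp σ (fun k => g (I k))).symm
  -- termwise bound
  have hterm : ∀ k : Fin m, g ((k:ℕ) + 1) ≤ g (I (σ k)) := by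
    intro k
    exact gmono ((k:ℕ)+1) (I (σ k)) (Nat.le_add_left 1 _) (hσ k) (hle _)
  have hsum : ∑ k : Fin m, g ((k:ℕ)+1) ≤ ∑ k : Fin m, g (I (σ k)) :=
    Finset.sum_le_sum fun k _ => hterm k
  -- telescoping
  set F : ℕ → ℝ := fun j => Ψ (1 - (j:ℝ)/B) with hF
  have htel : ∑ k : Fin m, g ((k:ℕ)+1) = F 0 - F m := by
    rw [Fin.sum_univ_eq_sum_range (fun k => g (k+1)) m]
    rw [← Finset.sum_range_sub' F m]
    apply Finset.sum_congr rfl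
    intro k _
    simp only [hg, hF]
    push_cast
    ring_nf
  have hF0 : F 0 = 1 := by simp [hF, hone]
  have : ∑ k : Fin m, (Ψ (1 - ((I k : ℝ) - 1) / B) - Ψ (1 - (I k : ℝ) / B))
      = ∑ k : Fin m, g (I k) := by
    apply Finset.sum_congr rfl; intro k _; simp [hg]
  rw [this, hperm]
  have hFm : F m = Ψ (1 - (m:ℝ)/B) := rfl
  linarith [hsum, htel, hF0]
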